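/- Let g(T) ∈ K[T] be monic, irreducible, and separable, and let L ⊇ K be a finite separable extension with h(T) ∈ L[T] monic such that h(T) divides g(T) in L[T] and deg g(T) = [L:K] · deg h(T). Then L is generated over K by the coefficients of h(T). -/

import Mathlib

open Polynomial IntermediateField
set_option maxHeartbeats 1000000

/-- Let `g(T) ∈ K[T]` be monic, irreducible, and separable, and let `L ⊇ K`
be a finite separable extension with `h(T) ∈ L[T]` monic such that `h(T)` divides `g(T)`
in `L[T]` and `deg g(T) = [L:K] · deg h(T)`. Then `L` is generated over `K` by the
coefficients of `h(T)`. -/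
theorem generated_by_coeffs_of_normic
    (K L : Type*) [Field K] [Field L] [Algebra K L]
    [FiniteDimensional K L] [Algebra.IsSeparable K L]
    (g : Polynomial K) (hmonic : g.Monic) (hirr : Irreducible g) (hsep : g.Separable)
    (h : Polynomial L) (hhm : h.Monic)
    (hdvd : h ∣ g.map (algebraMap K L))
    (hdeg : g.natDegree = Module.finrank K L * h.natDegree) :
    Algebra.adjoin K (Set.range h.coeff) = ⊤ := by
  set S := Set.range h.coeff with hS
  set F : IntermediateField K L := IntermediateField.adjoin K S with hFdef
  suffices hF : F = ⊤ by
    have halg : ∀ x ∈ S, IsAlgebraic K x := fun x _ => Algebra.IsAlgebraic.isAlgebraic x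
    have h1 := IntermediateField.adjoin_toSubalgebra_of_isAlgebraic halg
    rw [← h1, show IntermediateField.adjoin K S = F from rfl, hF]
    rfl
  have hg0 : 0 < g.natDegree := hirr.natDegree_pos
  have hh0 : 0 < h.natDegree := by
    rcases Nat.eq_zero_or_pos h.natDegree with h0 | h0
    · rw [h0, Nat.mul_zero] at hdeg; omega
    · exact h0
  have hcoe : ∀ n, h.coeff n ∈ F := fun n => IntermediateField.subset_adjoin K S ⟨n, rfl⟩
  have hl : h ∈ Polynomial.lifts (algebraMap F L) := by
    rw [Polynomial.lifts_iff_coeff_lifts]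
    exact fun n => ⟨⟨h.coeff n, hcoe n⟩, rfl⟩
  obtain ⟨h', hmap, hdeg', hmon'⟩ := Polynomial.lifts_and_degree_eq_and_monic hl hhm
  have hndeg' : h'.natDegree = h.natDegree := by
    rw [← hmap]; exact (hmon'.natDegree_map _).symm
  have hdvdF : h' ∣ g.map (algebraMap K F) := by
    rw [← Polynomial.map_dvd_map (algebraMap F L) (algebraMap F L).injective hmon',
      hmap, Polynomial.map_map, ← IsScalarTower.algebraMap_eq]
    exact hdvd
  set Ω := AlgebraicClosure L with hΩ
  obtain ⟨α, hα⟩ : ∃ α : Ω, ((h'.map (algebraMap F Ω)).IsRoot α) := by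
    apply IsAlgClosed.exists_root
    rw [Polynomial.degree_map]
    exact Polynomial.degree_ne_of_natDegree_ne (by rw [hndeg']; exact hh0.ne')
  have haev : Polynomial.aeval α h' = 0 := by
    rwa [Polynomial.aeval_def, ← Polynomial.eval_map]
  have hgα : Polynomial.aeval α g = 0 := by
    obtain ⟨q, hq⟩ := hdvdF
    have : g.map (algebraMap K Ω) = (h'.map (algebraMap F Ω)) * (q.map (algebraMap F Ω)) := by
      rw [IsScalarTower.algebraMap_eq K F Ω, ← Polynomial.map_map, hq, Polynomial.map_mul]
    rw [Polynomial.aeval_def, ← Polynomial.eval_map, this, Polynomial.eval_mul, hα, zero_mul]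
  have hintK : IsIntegral K α := ⟨g, hmonic, by rwa [← Polynomial.aeval_def]⟩
  have hming : minpoly K α = g := (minpoly.eq_of_irreducible_of_monic hirr hgα hmonic).symm
  have h1 : Module.finrank K K⟮α⟯ = g.natDegree := by
    rw [IntermediateField.adjoin.finrank hintK, hming]
  have hintF : IsIntegral F α := ⟨h', hmon', by rwa [← Polynomial.aeval_def]⟩
  set E : IntermediateField F Ω := F⟮α⟯ with hE
  have hEfin : FiniteDimensional F E := IntermediateField.adjoin.finiteDimensional hintF
  have hEdeg : Module.finrank F E = (minpoly F α).natDegree :=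
    IntermediateField.adjoin.finrank hintF
  have hmle : (minpoly F α).natDegree ≤ h.natDegree := by
    rw [← hndeg']
    exact Polynomial.natDegree_le_of_dvd (minpoly.dvd F α haev) hmon'.ne_zero
  have hFfin : FiniteDimensional K F := inferInstance
  have hEfinK : FiniteDimensional K E := FiniteDimensional.trans K F E
  have hEfinK' : FiniteDimensional K (IntermediateField.restrictScalars K E) := hEfinK
  have hle : K⟮α⟯ ≤ IntermediateField.restrictScalars K E := by
    rw [IntermediateField.adjoin_le_iff]
    intro x hx
    rw [Set.mem_singleton_iff] at hx
    rw [hx]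
    exact IntermediateField.mem_adjoin_simple_self F α
  have h3 : Module.finrank K K⟮α⟯ ≤ Module.finrank K (IntermediateField.restrictScalars K E) := by
    exact LinearMap.finrank_le_finrank_of_injective
      (f := (IntermediateField.inclusion hle).toLinearMap)
      ((IntermediateField.inclusion hle).toRingHom.injective)
  have h4 : Module.finrank K (IntermediateField.restrictScalars K E) =
      Module.finrank K F * Module.finrank F E := by
    haveI : Module.Free F E := Module.Free.of_divisionRing F E
    exact (Module.finrank_mul_finrank K F E).symm
  have key : Module.finrank K L ≤ Module.finrank K F := by
    have : Module.finrank K L * h.natDegree ≤ Module.finrank K F * h.natDegree := by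
      calc Module.finrank K L * h.natDegree = g.natDegree := hdeg.symm
        _ = Module.finrank K K⟮α⟯ := h1.symm
        _ ≤ Module.finrank K F * Module.finrank F E := by rw [← h4]; exact h3
        _ ≤ Module.finrank K F * h.natDegree := by
            exact Nat.mul_le_mul_left _ (hEdeg ▸ hmle)
    exact Nat.le_of_mul_le_mul_right this hh0
  have hsub : F.toSubmodule = ⊤ := by
    apply Submodule.eq_top_of_finrank_eq
    exact le_antisymm (Submodule.finrank_le _) (by rwa [show Module.finrank K F.toSubmodule = Module.finrank K F from rfl])
  have : F.toSubalgebra = ⊤ := Algebra.toSubmodule_eq_top.1 hsub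
  exact IntermediateField.toSubalgebra_injective (by rw [this, IntermediateField.top_toSubalgebra])
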